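/- If T is an acute lattice triangle whose sides have lattice lengths 1, 1, m for some positive integer m, then the orthocenter of T is not a lattice point. -/

import Mathlib

set_option maxHeartbeats 1000000

lemma perp_int (a1 a2 x1 x2 : ℤ) (h : Int.gcd a1 a2 = 1)
    (hx : x1 * a1 + x2 * a2 = 0) : ∃ k : ℤ, x1 = -(k * a2) ∧ x2 = k * a1 := by
  rcases eq_or_ne a1 0 with rfl | h1
  · have ha2 : a2 * a2 = 1 := by
      have hn : a2.natAbs = 1 := by simpa [Int.gcd] using h
      rcases Int.natAbs_eq_iff.mp hn with h' | h' <;> rw [h'] <;> ring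
    have hx2 : x2 = 0 := by
      have h0 : x2 * a2 = 0 := by linarith
      rcases mul_eq_zero.mp h0 with h' | h'
      · exact h'
      · exfalso; rw [h'] at ha2; simp at ha2
    refine ⟨-(x1 * a2), ?_, by simp [hx2]⟩
    linear_combination (-x1) * ha2
  · have hco : IsCoprime a1 a2 := Int.isCoprime_iff_gcd_eq_one.mpr h
    have hdvd : a1 ∣ x2 := by
      have h' : a1 ∣ x2 * a2 := ⟨-x1, by linarith⟩
      exact hco.dvd_of_dvd_mul_right h'
    obtain ⟨k, hk⟩ := hdvd
    refine ⟨k, ?_, by rw [hk]; ring⟩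
    have h' : a1 * x1 = a1 * (-(k * a2)) := by rw [hk] at hx; linarith
    exact mul_left_cancel₀ h1 h'

lemma gcd_factor (x y : ℤ) (m : ℕ) (hm : 0 < m) (h : Int.gcd x y = m) :
    ∃ c1 c2 : ℤ, x = m * c1 ∧ y = m * c2 ∧ Int.gcd c1 c2 = 1 := by
  have hd1 : (m : ℤ) ∣ x := h ▸ Int.gcd_dvd_left x y
  have hd2 : (m : ℤ) ∣ y := h ▸ Int.gcd_dvd_right x y
  refine ⟨x / m, y / m, (Int.mul_ediv_cancel' hd1).symm, (Int.mul_ediv_cancel' hd2).symm, ?_⟩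
  have hpos : 0 < Int.gcd x y := by rw [h]; exact hm
  have := Int.gcd_div_gcd_div_gcd hpos
  rwa [h] at this

lemma key (a1 a2 b1 b2 c1 c2 u v m : ℤ)
    (hm : 0 < m)
    (hb1 : b1 - a1 = m * c1) (hb2 : b2 - a2 = m * c2)
    (hcpos : 0 < c1 ^ 2 + c2 ^ 2)
    (hq : b1 * c1 + b2 * c2 = -(u * (a1 * c2 - a2 * c1)))
    (hp : a1 * c1 + a2 * c2 = -(v * (a1 * c2 - a2 * c1)))
    (hA0 : 0 < b1 ^ 2 + b2 ^ 2 - (a1 * b1 + a2 * b2))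
    (hA1 : 0 < a1 ^ 2 + a2 ^ 2 - (a1 * b1 + a2 * b2))
    (hA2 : 0 < a1 * b1 + a2 * b2) : False := by
  have hs : b1 * c2 - b2 * c1 = a1 * c2 - a2 * c1 := by linear_combination c2 * hb1 - c1 * hb2
  have hqp : (b1 * c1 + b2 * c2) - (a1 * c1 + a2 * c2) = m * (c1 ^ 2 + c2 ^ 2) := by
    linear_combination c1 * hb1 + c2 * hb2
  have hid : (a1 * b1 + a2 * b2) * (c1 ^ 2 + c2 ^ 2)
      = (a1 * c1 + a2 * c2) * (b1 * c1 + b2 * c2) + (a1 * c2 - a2 * c1) ^ 2 := by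
    linear_combination (a1 * c2 - a2 * c1) * hs
  have hbbcc : (b1 * c1 + b2 * c2) ^ 2 + (a1 * c2 - a2 * c1) ^ 2
      = (b1 ^ 2 + b2 ^ 2) * (c1 ^ 2 + c2 ^ 2) := by
    linear_combination (-(a1 * c2 - a2 * c1) - (b1 * c2 - b2 * c1)) * hs
  have haacc : (a1 * c1 + a2 * c2) ^ 2 + (a1 * c2 - a2 * c1) ^ 2
      = (a1 ^ 2 + a2 ^ 2) * (c1 ^ 2 + c2 ^ 2) := by ring
  have hccm : 0 < m * (c1 ^ 2 + c2 ^ 2) := mul_pos hm hcpos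
  have hq0 : 0 < b1 * c1 + b2 * c2 := by
    nlinarith [mul_pos hA0 hcpos, hqp, hbbcc, hid, hccm]
  have hp0 : a1 * c1 + a2 * c2 < 0 := by
    nlinarith [mul_pos hA1 hcpos, hqp, haacc, hid, hccm]
  have hs2 : 0 < (a1 * c2 - a2 * c1) ^ 2 := by
    rcases eq_or_ne (a1 * c2 - a2 * c1) 0 with h | h
    · rw [h] at hq; simp at hq; linarith
    · positivity
  have hus : u * (a1 * c2 - a2 * c1) < 0 := by linarith [hq]
  have hvs : 0 < v * (a1 * c2 - a2 * c1) := by linarith [hp]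
  have hprod : (u * (a1 * c2 - a2 * c1)) * (v * (a1 * c2 - a2 * c1)) < 0 :=
    mul_neg_of_neg_of_pos hus hvs
  have huv : u * v < 0 := by nlinarith [hprod, hs2]
  have huv1 : u * v ≤ -1 := by linarith [Int.lt_iff_add_one_le.mp huv]
  have hpq : (a1 * c1 + a2 * c2) * (b1 * c1 + b2 * c2) = (u * v) * (a1 * c2 - a2 * c1) ^ 2 := by
    linear_combination (b1 * c1 + b2 * c2) * hp - (v * (a1 * c2 - a2 * c1)) * hq
  have hle : (a1 * b1 + a2 * b2) * (c1 ^ 2 + c2 ^ 2) ≤ 0 := by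
    nlinarith [huv1, hs2, hid, hpq]
  linarith [mul_pos hA2 hcpos]



/-- Lattice length of the segment joining two lattice points. -/
def llen (P Q : ℤ × ℤ) : ℕ := Int.gcd (P.1 - Q.1) (P.2 - Q.2)

/-- Integer dot product on `ℤ × ℤ`. -/
def dotv (u v : ℤ × ℤ) : ℤ := u.1 * v.1 + u.2 * v.2

/-- The three vertices are not collinear (a genuine triangle). -/
def Noncollinear (V₀ V₁ V₂ : ℤ × ℤ) : Prop :=
  (V₁.1 - V₀.1) * (V₂.2 - V₀.2) - (V₂.1 - V₀.1) * (V₁.2 - V₀.2) ≠ 0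

/-- All three interior angles are strictly acute (positive dot products at each vertex). -/
def IsAcute (V₀ V₁ V₂ : ℤ × ℤ) : Prop :=
  0 < dotv (V₁ - V₀) (V₂ - V₀) ∧ 0 < dotv (V₀ - V₁) (V₂ - V₁) ∧
    0 < dotv (V₀ - V₂) (V₁ - V₂)

/-- `H` is the orthocenter of the triangle `V₀V₁V₂`. -/
def IsOrthocenter (H V₀ V₁ V₂ : ℤ × ℤ) : Prop :=
  dotv (H - V₀) (V₁ - V₂) = 0 ∧ dotv (H - V₁) (V₂ - V₀) = 0 ∧
    dotv (H - V₂) (V₀ - V₁) = 0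

/-- `F` is the circumcenter of the triangle `V₀V₁V₂` (equidistant from the vertices). -/
def IsCircumcenter (F V₀ V₁ V₂ : ℤ × ℤ) : Prop :=
  dotv (F - V₀) (F - V₀) = dotv (F - V₁) (F - V₁) ∧
    dotv (F - V₀) (F - V₀) = dotv (F - V₂) (F - V₂)

/-- Lattice perimeter of a lattice triangle. -/
def latPerim (V₀ V₁ V₂ : ℤ × ℤ) : ℕ := llen V₀ V₁ + llen V₁ V₂ + llen V₀ V₂

/-- The interior angle of the triangle at vertex `V`, with the other vertices `A`, `B`. -/
noncomputable def angleAt (V A B : ℤ × ℤ) : ℝ :=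
  Real.arccos ((((A.1 - V.1) * (B.1 - V.1) + (A.2 - V.2) * (B.2 - V.2) : ℤ) : ℝ) /
    (Real.sqrt (((A.1 - V.1) ^ 2 + (A.2 - V.2) ^ 2 : ℤ)) *
      Real.sqrt (((B.1 - V.1) ^ 2 + (B.2 - V.2) ^ 2 : ℤ))))

theorem stmt7 (V₀ V₁ V₂ : ℤ × ℤ) (m : ℕ) (hm : 0 < m)
    (hacute : IsAcute V₀ V₁ V₂)
    (h0 : llen V₁ V₂ = 1) (h1 : llen V₀ V₂ = 1) (h2 : llen V₀ V₁ = m) :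
    ¬ ∃ H : ℤ × ℤ, IsOrthocenter H V₀ V₁ V₂ := by
  rintro ⟨H, e0, e1, e2⟩
  obtain ⟨hA0, hA1, hA2⟩ := hacute
  simp only [dotv, Prod.fst_sub, Prod.snd_sub] at e0 e1 e2 hA0 hA1 hA2
  unfold llen at h0 h1 h2
  have hmz : (m : ℤ) ≠ 0 := by exact_mod_cast hm.ne'
  obtain ⟨c1, c2, hc1, hc2, hcg⟩ := gcd_factor _ _ m hm h2
  obtain ⟨u, hu1, hu2⟩ := perp_int (V₁.1 - V₂.1) (V₁.2 - V₂.2) (H.1 - V₀.1) (H.2 - V₀.2) h0 e0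
  have e1' : (H.1 - V₁.1) * (V₀.1 - V₂.1) + (H.2 - V₁.2) * (V₀.2 - V₂.2) = 0 := by
    linear_combination -e1
  obtain ⟨v, hv1, hv2⟩ := perp_int (V₀.1 - V₂.1) (V₀.2 - V₂.2) (H.1 - V₁.1) (H.2 - V₁.2) h1 e1'
  have e2' : (H.1 - V₂.1) * c1 + (H.2 - V₂.2) * c2 = 0 := by
    rw [hc1, hc2] at e2
    have h' : (m : ℤ) * ((H.1 - V₂.1) * c1 + (H.2 - V₂.2) * c2) = 0 := by linear_combination e2
    exact (mul_eq_zero.mp h').resolve_left hmz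
  obtain ⟨t, ht1, ht2⟩ := perp_int c1 c2 (H.1 - V₂.1) (H.2 - V₂.2) hcg e2'
  have hcpos : 0 < c1 ^ 2 + c2 ^ 2 := by
    rcases eq_or_ne c1 0 with rfl | h
    · have hc2ne : c2 ≠ 0 := by rintro rfl; simp [Int.gcd] at hcg
      positivity
    · positivity
  refine key (V₁.1 - V₂.1) (V₁.2 - V₂.2) (V₀.1 - V₂.1) (V₀.2 - V₂.2) c1 c2 u v (m : ℤ)
    (by exact_mod_cast hm) (by linear_combination hc1) (by linear_combination hc2) hcpos
    ?_ ?_ (by linarith [hA0]) (by linarith [hA1]) (by linarith [hA2])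
  · linear_combination (-c1) * hu1 - c2 * hu2 + c1 * ht1 + c2 * ht2
  · linear_combination (-c1) * hv1 - c2 * hv2 + c1 * ht1 + c2 * ht2 - v * c2 * hc1 + v * c1 * hc2
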